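/- There exists a language of infinite words (namely L_sep) that is recognized by a nondeterministic max-automaton but is not recognized by any deterministic max-automaton; hence nondeterministic max-automata recognize strictly more languages than deterministic ones. -/

import Mathlib

namespace MaxReg

/-! ### Counter operations and boolean combinations -/

inductive CounterOp (C : Type) where
  | inc (c : C)
  | reset (c : C)
  | output (c : C)
  | maxOp (c d : C)

def applyOp {C : Type} [DecidableEq C] (v : C → ℕ) :
    CounterOp C → (C → ℕ) × Option (C × ℕ)
  | .inc c => (Function.update v c (v c + 1), none)
  | .reset c => (Function.update v c 0, none)
  | .output c => (v, some (c, v c))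
  | .maxOp c d => (Function.update v c (max (v c) (v d)), none)

def applyOps {C : Type} [DecidableEq C] :
    List (CounterOp C) → (C → ℕ) → (C → ℕ) × List (C × ℕ)
  | [], v => (v, [])
  | op :: ops, v =>
      let p := applyOp v op
      let r := applyOps ops p.1
      (r.1, p.2.toList ++ r.2)

/-- Boolean combinations with atoms in `σ` (used for acceptance conditions:
the atom `c` stands for "the sequence of values output on counter `c` is bounded"). -/
inductive BC (σ : Type) where
  | tt
  | atom (a : σ)
  | nt (φ : BC σ)
  | an (φ ψ : BC σ)

def BC.eval {σ : Type} (f : σ → Prop) : BC σ → Prop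
  | .tt => True
  | .atom a => f a
  | .nt φ => ¬ φ.eval f
  | .an φ ψ => φ.eval f ∧ ψ.eval f

/-! ### Deterministic max-automata -/

structure MaxAutomaton (α : Type) where
  Q : Type
  C : Type
  [finQ : Fintype Q]
  [finC : Fintype C]
  [decC : DecidableEq C]
  init : Q
  δ : Q → α → Q × List (CounterOp C)
  acc : BC C

attribute [instance] MaxAutomaton.finQ MaxAutomaton.finC MaxAutomaton.decC

namespace MaxAutomaton

variable {α : Type} (A : MaxAutomaton α)

/-- The state at position `n` of the unique run on `w`, started in state `q`
(at position `0`). -/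
def runFrom (q : A.Q) (w : ℕ → α) : ℕ → A.Q
  | 0 => q
  | n + 1 => (A.δ (runFrom q w n) (w n)).1

/-- Counter values before reading the letter at position `n` (all counters start at `0`). -/
def valsFrom (q : A.Q) (w : ℕ → α) : ℕ → (A.C → ℕ)
  | 0 => fun _ => 0
  | n + 1 => (applyOps (A.δ (A.runFrom q w n) (w n)).2 (valsFrom q w n)).1

/-- The (counter, value) pairs output while reading the letter at position `n`. -/
def outsFrom (q : A.Q) (w : ℕ → α) (n : ℕ) : List (A.C × ℕ) :=
  (applyOps (A.δ (A.runFrom q w n) (w n)).2 (A.valsFrom q w n)).2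

/-- "The sequence `ρ_c` of values output on counter `c` is bounded." -/
def BoundedFrom (q : A.Q) (w : ℕ → α) (c : A.C) : Prop :=
  ∃ B, ∀ n, ∀ p ∈ A.outsFrom q w n, p.1 = c → p.2 ≤ B

def AcceptsFrom (q : A.Q) (w : ℕ → α) : Prop :=
  A.acc.eval (A.BoundedFrom q w)

def Accepts (w : ℕ → α) : Prop := A.AcceptsFrom A.init w

def Lang : Set (ℕ → α) := { w | A.Accepts w }

/-- One step on a configuration (state, counter valuation), for reading finite words. -/
def stepList (p : A.Q × (A.C → ℕ)) (a : α) : A.Q × (A.C → ℕ) :=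
  ((A.δ p.1 a).1, (applyOps (A.δ p.1 a).2 p.2).1)

/-- Configuration (state, counter valuation) reached after reading a finite word
from the initial state with all counters `0`. -/
def readConfig (l : List α) : A.Q × (A.C → ℕ) :=
  l.foldl A.stepList (A.init, fun _ => 0)

end MaxAutomaton

/-! ### Annotating words with sets -/

/-- `w[X]` : extend each letter of `w` with the bit `1` exactly at the positions in `X`. -/
def withSet {α : Type} (w : ℕ → α) (X : Finset ℕ) : ℕ → α × Bool :=
  fun n => (w n, decide (n ∈ X))

/-- `w[X₁,…,Xₙ]` : extend each letter of `w` with a bit vector. -/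
def withSets {α : Type} {n : ℕ} (w : ℕ → α) (Xs : Fin n → Finset ℕ) :
    ℕ → α × (Fin n → Bool) :=
  fun m => (w m, fun i => decide (m ∈ Xs i))

/-- Annotate a finite word with a set of positions. -/
def encodeList {α : Type} (l : List α) (X : Finset ℕ) : List (α × Bool) :=
  l.zipIdx.map (fun p => (p.1, decide (p.2 ∈ X)))

/-- `UL` : the words `w` such that `w[X] ∈ L` for arbitrarily large finite sets `X`. -/
def UL {α : Type} (L : Set (ℕ → α × Bool)) : Set (ℕ → α) :=
  { w | ∀ n : ℕ, ∃ X : Finset ℕ, n ≤ X.card ∧ withSet w X ∈ L }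

/-- `max(q, l)` : maximal cardinality of a set `X` of positions of `l` such that `A`
reaches state `q` after reading `l[X]` (and `0` if there is no such set). -/
noncomputable def maxReach {α : Type} (A : MaxAutomaton (α × Bool)) (q : A.Q)
    (l : List α) : ℕ :=
  sSup { k | ∃ X : Finset ℕ, (∀ x ∈ X, x < l.length) ∧ X.card = k ∧
    (A.readConfig (encodeList l X)).1 = q }

def suffixFrom {α : Type} (w : ℕ → α) (n : ℕ) : ℕ → α := fun k => w (n + k)

def prefixList {α : Type} (w : ℕ → α) (n : ℕ) : List α := (List.range n).map w

/-! ### WMSO+U and MSO+U formulas -/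

inductive Formula (α : Type) where
  | letter (a : α) (x : ℕ)
  | mem (x X : ℕ)
  | le (x y : ℕ)
  | not (φ : Formula α)
  | and (φ ψ : Formula α)
  | exFO (x : ℕ) (φ : Formula α)
  | exSO (X : ℕ) (φ : Formula α)
  | U (X : ℕ) (φ : Formula α)

/-- Weak semantics: set variables range over finite sets of positions. -/
def Sat {α : Type} (w : ℕ → α) (v1 : ℕ → ℕ) (v2 : ℕ → Finset ℕ) :
    Formula α → Prop
  | .letter a x => w (v1 x) = a
  | .mem x X => v1 x ∈ v2 X
  | .le x y => v1 x ≤ v1 y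
  | .not φ => ¬ Sat w v1 v2 φ
  | .and φ ψ => Sat w v1 v2 φ ∧ Sat w v1 v2 ψ
  | .exFO x φ => ∃ k : ℕ, Sat w (Function.update v1 x k) v2 φ
  | .exSO X φ => ∃ S : Finset ℕ, Sat w v1 (Function.update v2 X S) φ
  | .U X φ => ∀ n : ℕ, ∃ S : Finset ℕ, n ≤ S.card ∧
      Sat w v1 (Function.update v2 X S) φ

/-- Full semantics: set variables range over arbitrary subsets of ℕ; the
unbounding quantifier still speaks about finite sets. -/
def SatFull {α : Type} (w : ℕ → α) (v1 : ℕ → ℕ) (v2 : ℕ → Set ℕ) :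
    Formula α → Prop
  | .letter a x => w (v1 x) = a
  | .mem x X => v1 x ∈ v2 X
  | .le x y => v1 x ≤ v1 y
  | .not φ => ¬ SatFull w v1 v2 φ
  | .and φ ψ => SatFull w v1 v2 φ ∧ SatFull w v1 v2 ψ
  | .exFO x φ => ∃ k : ℕ, SatFull w (Function.update v1 x k) v2 φ
  | .exSO X φ => ∃ S : Set ℕ, SatFull w v1 (Function.update v2 X S) φ
  | .U X φ => ∀ n : ℕ, ∃ S : Finset ℕ, n ≤ S.card ∧
      SatFull w v1 (Function.update v2 X (↑S : Set ℕ)) φ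

def freeFO {α : Type} : Formula α → Finset ℕ
  | .letter _ x => {x}
  | .mem x _ => {x}
  | .le x y => {x, y}
  | .not φ => freeFO φ
  | .and φ ψ => freeFO φ ∪ freeFO ψ
  | .exFO x φ => freeFO φ \ {x}
  | .exSO _ φ => freeFO φ
  | .U _ φ => freeFO φ

def freeSO {α : Type} : Formula α → Finset ℕ
  | .letter _ _ => ∅
  | .mem _ X => {X}
  | .le _ _ => ∅
  | .not φ => freeSO φ
  | .and φ ψ => freeSO φ ∪ freeSO ψ
  | .exFO _ φ => freeSO φ
  | .exSO X φ => freeSO φ \ {X}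
  | .U X φ => freeSO φ \ {X}

def Sentence {α : Type} (φ : Formula α) : Prop :=
  freeFO φ = ∅ ∧ freeSO φ = ∅

/-- `L` is definable by a sentence of WMSO+U. -/
def DefinableW {α : Type} (L : Set (ℕ → α)) : Prop :=
  ∃ φ : Formula α, Sentence φ ∧
    L = { w | Sat w (fun _ => 0) (fun _ => (∅ : Finset ℕ)) φ }

/-- `L` is definable by a sentence of full MSO+U. -/
def DefinableF {α : Type} (L : Set (ℕ → α)) : Prop :=
  ∃ φ : Formula α, Sentence φ ∧
    L = { w | SatFull w (fun _ => 0) (fun _ => (∅ : Set ℕ)) φ }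

/-- `φ` contains no occurrence of the unbounding quantifier. -/
def UFree {α : Type} : Formula α → Prop
  | .letter _ _ => True
  | .mem _ _ => True
  | .le _ _ => True
  | .not φ => UFree φ
  | .and φ ψ => UFree φ ∧ UFree ψ
  | .exFO _ φ => UFree φ
  | .exSO _ φ => UFree φ
  | .U _ _ => False

/-- Boolean combinations of formulas `U X. φ` with `φ` free of the unbounding
quantifier. -/
inductive IsUNormal {α : Type} : Formula α → Prop
  | base (X : ℕ) (φ : Formula α) : UFree φ → IsUNormal (.U X φ)
  | not {φ : Formula α} : IsUNormal φ → IsUNormal (.not φ)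
  | and {φ ψ : Formula α} : IsUNormal φ → IsUNormal ψ →
      IsUNormal (.and φ ψ)

/-! ### Deterministic Muller automata -/

structure MullerAutomaton (α : Type) where
  Q : Type
  [finQ : Fintype Q]
  init : Q
  δ : Q → α → Q
  F : Set (Set Q)

attribute [instance] MullerAutomaton.finQ

namespace MullerAutomaton

variable {α : Type} (M : MullerAutomaton α)

def run (w : ℕ → α) : ℕ → M.Q
  | 0 => M.init
  | n + 1 => M.δ (run w n) (w n)

/-- States occurring infinitely often in the run on `w`. -/
def InfOcc (w : ℕ → α) : Set M.Q :=
  { q | ∀ n : ℕ, ∃ m, n ≤ m ∧ M.run w m = q }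

def Lang : Set (ℕ → α) := { w | M.InfOcc w ∈ M.F }

end MullerAutomaton

/-! ### Partial runs, convergence, spanning sets -/

section PartialRuns

variable {Q α : Type}

/-- State at position `n + k` of the run seeded at configuration `(q, n)`. -/
def runSeed (δ : Q → α → Q) (w : ℕ → α) (q : Q) (n : ℕ) : ℕ → Q
  | 0 => q
  | k + 1 => δ (runSeed δ w q n k) (w (n + k))

/-- The partial run seeded at configuration `(q, n)`. -/
def seeded (δ : Q → α → Q) (w : ℕ → α) (q : Q) (n : ℕ) : ℕ → Option Q :=
  fun m => if _h : n ≤ m then some (runSeed δ w q n (m - n)) else none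

/-- A partial run over `w`: either the nowhere-defined run or a seeded run. -/
def IsPartialRun (δ : Q → α → Q) (w : ℕ → α) (ρ : ℕ → Option Q) : Prop :=
  ρ = (fun _ => none) ∨ ∃ q n, ρ = seeded δ w q n

/-- Two partial runs converge if they agree from some position on. -/
def Converge (ρ₁ ρ₂ : ℕ → Option Q) : Prop :=
  ∃ N : ℕ, ∀ m, N ≤ m → ρ₁ m = ρ₂ m

/-- A set of partial runs spans `w` if every partial run over `w` converges with
some member of the set. -/
def Spans (δ : Q → α → Q) (w : ℕ → α) (S : Set (ℕ → Option Q)) : Prop :=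
  ∀ ρ, IsPartialRun δ w ρ → ∃ ρ' ∈ S, Converge ρ ρ'

end PartialRuns

/-! ### Deterministic letter-to-letter transducers -/

structure Transducer (α β : Type) where
  Q : Type
  [finQ : Fintype Q]
  init : Q
  δ : Q → α → Q
  out : Q → α → β

attribute [instance] Transducer.finQ

namespace Transducer

variable {α β : Type} (T : Transducer α β)

def run (w : ℕ → α) : ℕ → T.Q
  | 0 => T.init
  | n + 1 => T.δ (run w n) (w n)

/-- The function `Σ^ω → Γ^ω` computed by the transducer. -/
def f (w : ℕ → α) : ℕ → β := fun n => T.out (T.run w n) (w n)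

end Transducer

open Classical in
/-- Decode a word over `Q × {0,1}` as a partial run: position `m` is defined (with the
state recorded at `m`) iff all markers from position `m` on are `1`. -/
noncomputable def decode {Q : Type} (u : ℕ → Q × Bool) : ℕ → Option Q :=
  fun m => if (∀ j, m ≤ j → (u j).2 = true) then some (u m).1 else none

/-! ### Guarded max-automata -/

inductive GOp (C α : Type) where
  | inc (c : C)
  | reset (c : C)
  | output (c : C)
  | maxOp (c d : C)
  /-- `if G then output c` : output the value of `c` only if the suffix of the input
  beginning at the next position belongs to `G`. -/
  | goutput (G : Set (ℕ → α)) (c : C)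

open Classical in
noncomputable def applyGOp {C α : Type} [DecidableEq C] (suffix : ℕ → α)
    (v : C → ℕ) : GOp C α → (C → ℕ) × Option (C × ℕ)
  | .inc c => (Function.update v c (v c + 1), none)
  | .reset c => (Function.update v c 0, none)
  | .output c => (v, some (c, v c))
  | .maxOp c d => (Function.update v c (max (v c) (v d)), none)
  | .goutput G c => (v, if suffix ∈ G then some (c, v c) else none)

noncomputable def applyGOps {C α : Type} [DecidableEq C] (suffix : ℕ → α) :
    List (GOp C α) → (C → ℕ) → (C → ℕ) × List (C × ℕ)
  | [], v => (v, [])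
  | op :: ops, v =>
      let p := applyGOp suffix v op
      let r := applyGOps suffix ops p.1
      (r.1, p.2.toList ++ r.2)

def GOp.WF {C α : Type} : GOp C α → Prop
  | .goutput G _ => ∃ A : MaxAutomaton α, A.Lang = G
  | _ => True

structure GuardedMaxAutomaton (α : Type) where
  Q : Type
  C : Type
  [finQ : Fintype Q]
  [finC : Fintype C]
  [decC : DecidableEq C]
  init : Q
  δ : Q → α → Q × List (GOp C α)
  acc : BC C

attribute [instance] GuardedMaxAutomaton.finQ GuardedMaxAutomaton.finC
  GuardedMaxAutomaton.decC

namespace GuardedMaxAutomaton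

variable {α : Type} (B : GuardedMaxAutomaton α)

/-- All guards used by the automaton are languages recognized by deterministic
max-automata. -/
def WF : Prop := ∀ q a, ∀ op ∈ (B.δ q a).2, op.WF

def run (w : ℕ → α) : ℕ → B.Q
  | 0 => B.init
  | n + 1 => (B.δ (run w n) (w n)).1

noncomputable def vals (w : ℕ → α) : ℕ → (B.C → ℕ)
  | 0 => fun _ => 0
  | n + 1 =>
      (applyGOps (suffixFrom w (n + 1)) (B.δ (B.run w n) (w n)).2 (vals w n)).1

noncomputable def outs (w : ℕ → α) (n : ℕ) : List (B.C × ℕ) :=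
  (applyGOps (suffixFrom w (n + 1)) (B.δ (B.run w n) (w n)).2 (B.vals w n)).2

def Bounded (w : ℕ → α) (c : B.C) : Prop :=
  ∃ Bd, ∀ n, ∀ p ∈ B.outs w n, p.1 = c → p.2 ≤ Bd

def Accepts (w : ℕ → α) : Prop := B.acc.eval (B.Bounded w)

def Lang : Set (ℕ → α) := { w | B.Accepts w }

end GuardedMaxAutomaton

/-! ### Nondeterministic max-automata -/

structure NMaxAutomaton (α : Type) where
  Q : Type
  C : Type
  [finQ : Fintype Q]
  [finC : Fintype C]
  [decC : DecidableEq C]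
  init : Q
  δ : Q → α → Set (Q × List (CounterOp C))
  acc : BC C

attribute [instance] NMaxAutomaton.finQ NMaxAutomaton.finC NMaxAutomaton.decC

/-- Counter values along a sequence of counter-operation lists. -/
def nvals {C : Type} [DecidableEq C] (ops : ℕ → List (CounterOp C)) :
    ℕ → (C → ℕ)
  | 0 => fun _ => 0
  | n + 1 => (applyOps (ops n) (nvals ops n)).1

def nouts {C : Type} [DecidableEq C] (ops : ℕ → List (CounterOp C)) (n : ℕ) :
    List (C × ℕ) :=
  (applyOps (ops n) (nvals ops n)).2

namespace NMaxAutomaton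

variable {α : Type} (A : NMaxAutomaton α)

def Accepts (w : ℕ → α) : Prop :=
  ∃ (q : ℕ → A.Q) (ops : ℕ → List (CounterOp A.C)),
    q 0 = A.init ∧
    (∀ n, (q (n + 1), ops n) ∈ A.δ (q n) (w n)) ∧
    A.acc.eval (fun c => ∃ B, ∀ n, ∀ p ∈ nouts ops n, p.1 = c → p.2 ≤ B)

def Lang : Set (ℕ → α) := { w | A.Accepts w }

end NMaxAutomaton

/-! ### The separating language -/

/-- Position of the `k`-th letter `b` in `a^{ns 0} b a^{ns 1} b ⋯` (0-indexed). -/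
def bpos (ns : ℕ → ℕ) (k : ℕ) : ℕ := (∑ i ∈ Finset.range (k + 1), ns i) + k

/-- `L_sep` over the alphabet `{a, b}` (with `a = false`, `b = true`): words
`a^{n₁} b a^{n₂} b ⋯` such that some number appears infinitely often in `n₁, n₂, …`. -/
def Lsep : Set (ℕ → Bool) :=
  { w | ∃ ns : ℕ → ℕ,
      (∀ m, w m = true ↔ ∃ k, bpos ns k = m) ∧
      ∃ v, { i | ns i = v }.Infinite }

/-! ### Topological notions -/

/-- A `Σ₂` set: a countable union of closed sets. -/
def IsSigma2 {X : Type} [TopologicalSpace X] (S : Set X) : Prop :=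
  ∃ F : ℕ → Set X, (∀ n, IsClosed (F n)) ∧ S = ⋃ n, F n

/-- Boolean combinations of `Σ₂` sets. -/
inductive IsBoolCombSigma2 {X : Type} [TopologicalSpace X] : Set X → Prop
  | base {S : Set X} : IsSigma2 S → IsBoolCombSigma2 S
  | compl {S : Set X} : IsBoolCombSigma2 S → IsBoolCombSigma2 Sᶜ
  | inter {S T : Set X} : IsBoolCombSigma2 S → IsBoolCombSigma2 T →
      IsBoolCombSigma2 (S ∩ T)


/-! ### Auxiliary development for the proof -/

section Aux

lemma BC.eval_congr {σ : Type} {p q : σ → Prop} (h : ∀ a, p a ↔ q a) :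
    ∀ φ : BC σ, (φ.eval p ↔ φ.eval q)
  | .tt => Iff.rfl
  | .atom a => h a
  | .nt φ => not_congr (BC.eval_congr h φ)
  | .an φ ψ => and_congr (BC.eval_congr h φ) (BC.eval_congr h ψ)

/-! #### Basic facts about `bpos` and coding words by sequences -/

lemma bpos_succ (ns : ℕ → ℕ) (k : ℕ) :
    bpos ns (k + 1) = bpos ns k + ns (k + 1) + 1 := by
  unfold bpos
  rw [Finset.sum_range_succ]
  ring

lemma bpos_strictMono (ns : ℕ → ℕ) : StrictMono (bpos ns) := by
  apply strictMono_nat_of_lt_succ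
  intro k
  rw [bpos_succ]
  omega

lemma bpos_zero (ns : ℕ → ℕ) : bpos ns 0 = ns 0 := by
  simp [bpos]

lemma bpos_congr {ns ns' : ℕ → ℕ} {k : ℕ} (h : ∀ i ≤ k, ns i = ns' i) :
    bpos ns k = bpos ns' k := by
  unfold bpos
  congr 1
  refine Finset.sum_congr rfl fun i hi => h i ?_
  have := Finset.mem_range.1 hi
  omega

lemma bpos_inj {ns ns' : ℕ → ℕ} (h : bpos ns = bpos ns') : ns = ns' := by
  funext k
  cases k with
  | zero =>
    have := congrFun h 0
    rwa [bpos_zero, bpos_zero] at this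
  | succ k =>
    have h1 := congrFun h (k + 1)
    have h2 := congrFun h k
    rw [bpos_succ, bpos_succ] at h1
    omega

open Classical in
/-- The word `a^{ns 0} b a^{ns 1} b ⋯` coded as a function `ℕ → Bool`. -/
noncomputable def wordOf (ns : ℕ → ℕ) : ℕ → Bool :=
  fun m => decide (∃ k, bpos ns k = m)

lemma wordOf_eq_true {ns : ℕ → ℕ} {m : ℕ} :
    wordOf ns m = true ↔ ∃ k, bpos ns k = m := by
  simp [wordOf]

lemma wordOf_congr {ns ns' : ℕ → ℕ} {m : ℕ} (h : ∀ i ≤ m, ns i = ns' i) :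
    wordOf ns m = wordOf ns' m := by
  unfold wordOf
  rw [decide_eq_decide]
  have key : ∀ k, bpos ns k = m → bpos ns' k = m := by
    intro k hk
    rw [← bpos_congr (fun i hi => h i ?_)]
    · exact hk
    · have : k ≤ bpos ns k := (bpos_strictMono ns).le_apply
      omega
  have key' : ∀ k, bpos ns' k = m → bpos ns k = m := by
    intro k hk
    rw [bpos_congr (ns := ns) (ns' := ns') (fun i hi => h i ?_)]
    · exact hk
    · have : k ≤ bpos ns' k := (bpos_strictMono ns').le_apply
      omega
  exact ⟨fun ⟨k, hk⟩ => ⟨k, key k hk⟩, fun ⟨k, hk⟩ => ⟨k, key' k hk⟩⟩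

lemma wordOf_mem_Lsep_iff {ns : ℕ → ℕ} :
    wordOf ns ∈ Lsep ↔ ∃ v, {i | ns i = v}.Infinite := by
  constructor
  · rintro ⟨ns', h1, v, hv⟩
    have hr : Set.range (bpos ns') = Set.range (bpos ns) := by
      ext m
      simp only [Set.mem_range]
      rw [← (h1 m), wordOf_eq_true]
    have heq : bpos ns' = bpos ns :=
      (StrictMono.range_inj (bpos_strictMono ns') (bpos_strictMono ns)).1 hr
    have : ns' = ns := bpos_inj heq
    subst this
    exact ⟨v, hv⟩
  · intro hv
    exact ⟨ns, fun m => wordOf_eq_true, hv⟩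

/-! #### Prefix determinism of deterministic max-automata -/

namespace MaxAutomaton

variable {α : Type} (A : MaxAutomaton α)

lemma runFrom_congr (q : A.Q) {w w' : ℕ → α} :
    ∀ n, (∀ i < n, w i = w' i) → A.runFrom q w n = A.runFrom q w' n := by
  intro n
  induction n with
  | zero => intro _; rfl
  | succ n ih =>
    intro h
    simp only [runFrom]
    rw [ih (fun i hi => h i (by omega)), h n (by omega)]

lemma valsFrom_congr (q : A.Q) {w w' : ℕ → α} :
    ∀ n, (∀ i < n, w i = w' i) → A.valsFrom q w n = A.valsFrom q w' n := by
  intro n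
  induction n with
  | zero => intro _; rfl
  | succ n ih =>
    intro h
    simp only [valsFrom]
    rw [ih (fun i hi => h i (by omega)), h n (by omega),
      A.runFrom_congr q n (fun i hi => h i (by omega))]

lemma outsFrom_congr (q : A.Q) {w w' : ℕ → α} (n : ℕ)
    (h : ∀ i ≤ n, w i = w' i) : A.outsFrom q w n = A.outsFrom q w' n := by
  unfold outsFrom
  rw [A.runFrom_congr q n (fun i hi => h i (by omega)),
    A.valsFrom_congr q n (fun i hi => h i (by omega)), h n le_rfl]

end MaxAutomaton

/-! #### Regions of Baire space and the core combinatorial lemma -/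

/-- A set of sequences such that non-membership is witnessed by a finite prefix
(i.e. a closed set in Baire space). -/
def ClosedSeq (K : Set (ℕ → ℕ)) : Prop :=
  ∀ f ∉ K, ∃ n : ℕ, ∀ g : ℕ → ℕ, (∀ i < n, g i = f i) → g ∉ K

/-- A region of Baire space: sequences extending the stem `g|_{[0,n)}` with all
later values at least `B`. -/
structure DReg where
  n : ℕ
  g : ℕ → ℕ
  B : ℕ

namespace DReg

def R (r : DReg) : Set (ℕ → ℕ) :=
  {f | (∀ i < r.n, f i = r.g i) ∧ ∀ i, r.n ≤ i → r.B ≤ f i}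

def Le (r' r : DReg) : Prop :=
  r.n ≤ r'.n ∧ r.B ≤ r'.B ∧ (∀ i < r.n, r'.g i = r.g i) ∧
    (∀ i, r.n ≤ i → i < r'.n → r.B ≤ r'.g i)

lemma Le.refl (r : DReg) : Le r r :=
  ⟨le_rfl, le_rfl, fun _ _ => rfl, fun _ h1 h2 => absurd h2 (by omega)⟩

lemma Le.trans {r'' r' r : DReg} (h1 : Le r'' r') (h2 : Le r' r) : Le r'' r := by
  obtain ⟨a1, b1, c1, d1⟩ := h1
  obtain ⟨a2, b2, c2, d2⟩ := h2
  refine ⟨le_trans a2 a1, le_trans b2 b1, fun i hi => ?_, fun i hi hi' => ?_⟩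
  · rw [c1 i (lt_of_lt_of_le hi a2)]
    exact c2 i hi
  · by_cases h : i < r'.n
    · rw [c1 i h]
      exact d2 i hi h
    · exact le_trans b2 (d1 i (by omega) hi')

lemma Le.subset {r' r : DReg} (h : Le r' r) : R r' ⊆ R r := by
  obtain ⟨a, b, c, d⟩ := h
  rintro f ⟨h1, h2⟩
  refine ⟨fun i hi => ?_, fun i hi => ?_⟩
  · rw [h1 i (lt_of_lt_of_le hi a), c i hi]
  · by_cases hlt : i < r'.n
    · rw [h1 i hlt]
      exact d i hi hlt
    · exact le_trans b (h2 i (by omega))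

end DReg

section CoreLemma

variable {C : Type} (K : C → ℕ → Set (ℕ → ℕ))

/-- The atom `c` can be decided positively below region `r`. -/
def DGood (c : C) (r : DReg) : Prop :=
  ∃ r', r'.Le r ∧ ∃ m, DReg.R r' ⊆ K c m

lemma DGood.mono {c : C} {r' r : DReg} (h : DGood K c r') (hle : r'.Le r) :
    DGood K c r := by
  obtain ⟨r'', h1, m, h2⟩ := h
  exact ⟨r'', h1.trans hle, m, h2⟩

lemma exists_kill (hK : ∀ c m, ClosedSeq (K c m)) {c : C} {r : DReg}
    (h : ¬ DGood K c r) (m : ℕ) :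
    ∃ r' : DReg, r'.Le r ∧ r'.B = r.B ∧ ∀ f ∈ DReg.R r', f ∉ K c m := by
  have h1 : ¬ DReg.R r ⊆ K c m := fun hs => h ⟨r, DReg.Le.refl r, m, hs⟩
  obtain ⟨g, hg, hgK⟩ := Set.not_subset.1 h1
  obtain ⟨N, hN⟩ := hK c m g hgK
  refine ⟨⟨max r.n N, g, r.B⟩, ⟨le_max_left _ _, le_rfl, fun i hi => hg.1 i hi,
    fun i hi _ => hg.2 i hi⟩, rfl, ?_⟩
  intro f hf
  exact hN f (fun i hi => hf.1 i (lt_of_lt_of_le hi (le_max_right _ _)))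

lemma exists_killList (hK : ∀ c m, ClosedSeq (K c m)) (l : List C) (m : ℕ) :
    ∀ r : DReg, ∃ r' : DReg, r'.Le r ∧ r'.B = r.B ∧
      ∀ c ∈ l, ¬ DGood K c r → ∀ f ∈ DReg.R r', f ∉ K c m := by
  induction l with
  | nil => exact fun r => ⟨r, DReg.Le.refl r, rfl, by simp⟩
  | cons c l ih =>
    intro r
    by_cases hc : DGood K c r
    · obtain ⟨r', h1, h2, h3⟩ := ih r
      refine ⟨r', h1, h2, ?_⟩
      intro c' hc' hg
      rcases List.mem_cons.1 hc' with h | h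
      · subst h; exact absurd hc hg
      · exact h3 c' h hg
    · obtain ⟨r1, hr1, hB1, hkill⟩ := exists_kill K hK hc m
      obtain ⟨r', h1, h2, h3⟩ := ih r1
      refine ⟨r', h1.trans hr1, by rw [h2, hB1], ?_⟩
      intro c' hc' hg
      rcases List.mem_cons.1 hc' with h | h
      · subst h
        exact fun f hf => hkill f (h1.subset hf)
      · refine h3 c' h (fun hgood => hg (DGood.mono K hgood hr1))

lemma exists_decideList (l : List C) :
    ∀ r : DReg, ∃ r₀ : DReg, r₀.Le r ∧
      ∀ c ∈ l, (∃ m, DReg.R r₀ ⊆ K c m) ∨ ¬ DGood K c r₀ := by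
  induction l with
  | nil => exact fun r => ⟨r, DReg.Le.refl r, by simp⟩
  | cons c l ih =>
    intro r
    by_cases hc : DGood K c r
    · obtain ⟨r1, hle, m, hsub⟩ := hc
      obtain ⟨r₀, h1, h2⟩ := ih r1
      refine ⟨r₀, h1.trans hle, ?_⟩
      intro c' hc'
      rcases List.mem_cons.1 hc' with h | h
      · subst h; exact Or.inl ⟨m, fun f hf => hsub (h1.subset hf)⟩
      · exact h2 c' h
    · obtain ⟨r₀, h1, h2⟩ := ih r
      refine ⟨r₀, h1, ?_⟩
      intro c' hc'
      rcases List.mem_cons.1 hc' with h | h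
      · subst h; exact Or.inr (fun hgood => hc (DGood.mono K hgood h1))
      · exact h2 c' h

/-- Extend the stem of a region by one value. -/
def appendReg (r : DReg) (x B' : ℕ) : DReg :=
  ⟨r.n + 1, Function.update r.g r.n x, B'⟩

lemma appendReg_le (r : DReg) {x B' : ℕ} (hx : r.B ≤ x) (hB : r.B ≤ B') :
    (appendReg r x B').Le r := by
  refine ⟨Nat.le_succ _, hB, fun i hi => ?_, fun i h1 h2 => ?_⟩
  · exact Function.update_of_ne (by omega) _ _
  · have : i = r.n := by simp [appendReg] at h2; omega
    subst this
    simpa [appendReg] using hx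

/-- Iterated shrinking of regions along a step function. -/
def dchain (st : ℕ → DReg → DReg) (r₀ : DReg) : ℕ → DReg
  | 0 => r₀
  | j + 1 => st j (dchain st r₀ j)

variable {st : ℕ → DReg → DReg} {r₀ : DReg}

lemma dchain_le (hst : ∀ j r, (st j r).Le r) :
    ∀ {i j : ℕ}, i ≤ j → (dchain st r₀ j).Le (dchain st r₀ i) := by
  intro i j h
  induction j with
  | zero => cases Nat.le_zero.1 h; exact DReg.Le.refl _
  | succ j ih =>
    rcases Nat.lt_or_ge i (j + 1) with h' | h'
    · exact (hst j _).trans (ih (by omega))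
    · have : i = j + 1 := by omega
      subst this; exact DReg.Le.refl _

lemma dchain_n (hst : ∀ j r, r.n < (st j r).n) :
    ∀ j, r₀.n + j ≤ (dchain st r₀ j).n := by
  intro j
  induction j with
  | zero => simp [dchain]
  | succ j ih =>
    have := hst j (dchain st r₀ j)
    simp only [dchain]
    omega

/-- The limit point of a chain of regions. -/
def dlim (st : ℕ → DReg → DReg) (r₀ : DReg) : ℕ → ℕ :=
  fun i => (dchain st r₀ (i + 1)).g i

lemma lt_dchain_n (hst : ∀ j r, r.n < (st j r).n) (i : ℕ) :
    i < (dchain st r₀ (i + 1)).n := by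
  have := dchain_n (st := st) (r₀ := r₀) hst (i + 1)
  omega

lemma dlim_mem (hle : ∀ j r, (st j r).Le r) (hst : ∀ j r, r.n < (st j r).n) :
    ∀ j, dlim st r₀ ∈ (dchain st r₀ j).R := by
  intro j
  constructor
  · intro i hi
    rcases le_or_gt (i + 1) j with h | h
    · have hc := dchain_le (st := st) (r₀ := r₀) hle h
      exact (hc.2.2.1 i (lt_dchain_n hst i)).symm
    · have hc := dchain_le (st := st) (r₀ := r₀) hle (by omega : j ≤ i + 1)
      exact hc.2.2.1 i hi
  · intro i hi
    have hjn : j ≤ (dchain st r₀ j).n := by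
      have := dchain_n (st := st) (r₀ := r₀) hst j
      omega
    have hij : j ≤ i + 1 := by omega
    have hc := dchain_le (st := st) (r₀ := r₀) hle hij
    exact hc.2.2.2 i hi (lt_dchain_n hst i)

/-- **Core lemma**: the set `{f : liminf f < ∞}` of sequences attaining some value
infinitely often is not a boolean combination of countable unions of closed subsets
of Baire space. -/
theorem no_bc_sigma2 [Fintype C]
    (hK : ∀ c m, ClosedSeq (K c m)) (φ : BC C)
    (hL : ∀ f : ℕ → ℕ,
      (∃ v, {i | f i = v}.Infinite) ↔ φ.eval (fun c => ∃ m, f ∈ K c m)) :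
    False := by
  classical
  obtain ⟨r₀, -, hdec⟩ :=
    exists_decideList K (Finset.univ.toList (α := C)) ⟨0, fun _ => 0, 0⟩
  have hmem_univ : ∀ c : C, c ∈ Finset.univ.toList (α := C) := by
    intro c; simp
  -- step function for the divergent point
  have hstep1 : ∀ (j : ℕ) (r : DReg), ∃ r' : DReg, r'.Le r ∧ r.n < r'.n ∧
      j ≤ r'.B ∧ ∀ c, ¬ DGood K c r → ∀ f ∈ DReg.R r', f ∉ K c j := by
    intro j r
    obtain ⟨r1, h1, hB, h2⟩ := exists_killList K hK (Finset.univ.toList (α := C)) j r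
    refine ⟨appendReg r1 (max r1.B j) (max r1.B j),
      (appendReg_le r1 (le_max_left _ _) (le_max_left _ _)).trans h1, ?_, le_max_right _ _, ?_⟩
    · have := h1.1; simp only [appendReg]; omega
    · intro c hg f hf
      exact h2 c (hmem_univ c) hg f
        ((appendReg_le r1 (le_max_left _ _) (le_max_left _ _)).subset hf)
  -- step function for the convergent point
  have hstep2 : ∀ (j : ℕ) (r : DReg), ∃ r' : DReg, r'.Le r ∧ r.n < r'.n ∧
      r'.B = r.B ∧ (∃ i, r.n ≤ i ∧ i < r'.n ∧ r'.g i = r.B) ∧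
      ∀ c, ¬ DGood K c r → ∀ f ∈ DReg.R r', f ∉ K c j := by
    intro j r
    obtain ⟨r1, h1, hB, h2⟩ := exists_killList K hK (Finset.univ.toList (α := C)) j r
    refine ⟨appendReg r1 r1.B r1.B,
      (appendReg_le r1 le_rfl le_rfl).trans h1, ?_, ?_, ?_, ?_⟩
    · have := h1.1; simp only [appendReg]; omega
    · simp only [appendReg]; exact hB
    · refine ⟨r1.n, h1.1, by simp [appendReg], ?_⟩
      simp only [appendReg]
      rw [Function.update_self, hB]
    · intro c hg f hf
      exact h2 c (hmem_univ c) hg f ((appendReg_le r1 le_rfl le_rfl).subset hf)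
  choose st1 hst1 using hstep1
  choose st2 hst2 using hstep2
  have hle1 : ∀ j r, (st1 j r).Le r := fun j r => (hst1 j r).1
  have hn1 : ∀ j r, r.n < (st1 j r).n := fun j r => (hst1 j r).2.1
  have hle2 : ∀ j r, (st2 j r).Le r := fun j r => (hst2 j r).1
  have hn2 : ∀ j r, r.n < (st2 j r).n := fun j r => (hst2 j r).2.1
  have hB2 : ∀ j r, (st2 j r).B = r.B := fun j r => (hst2 j r).2.2.1
  set f := dlim st1 r₀ with hf
  set f' := dlim st2 r₀ with hf'
  have hfmem : ∀ j, f ∈ (dchain st1 r₀ j).R := dlim_mem hle1 hn1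
  have hf'mem : ∀ j, f' ∈ (dchain st2 r₀ j).R := dlim_mem hle2 hn2
  have hfr₀ : f ∈ r₀.R := hfmem 0
  have hf'r₀ : f' ∈ r₀.R := hf'mem 0
  -- avoidance for undecided atoms
  have havoid1 : ∀ c, ¬ DGood K c r₀ → ∀ m, f ∉ K c m := by
    intro c hng m
    have hle : (dchain st1 r₀ m).Le r₀ := dchain_le hle1 (Nat.zero_le m)
    have hng' : ¬ DGood K c (dchain st1 r₀ m) := fun hgood => hng (DGood.mono K hgood hle)
    exact (hst1 m (dchain st1 r₀ m)).2.2.2 c hng' f (hfmem (m + 1))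
  have havoid2 : ∀ c, ¬ DGood K c r₀ → ∀ m, f' ∉ K c m := by
    intro c hng m
    have hle : (dchain st2 r₀ m).Le r₀ := dchain_le hle2 (Nat.zero_le m)
    have hng' : ¬ DGood K c (dchain st2 r₀ m) := fun hgood => hng (DGood.mono K hgood hle)
    exact (hst2 m (dchain st2 r₀ m)).2.2.2.2 c hng' f' (hf'mem (m + 1))
  -- the two points have the same atom values
  have hbits : ∀ c, (∃ m, f ∈ K c m) ↔ (∃ m, f' ∈ K c m) := by
    intro c
    rcases hdec c (hmem_univ c) with ⟨m, hsub⟩ | hng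
    · exact ⟨fun _ => ⟨m, hsub hf'r₀⟩, fun _ => ⟨m, hsub hfr₀⟩⟩
    · constructor
      · rintro ⟨m, hm⟩; exact absurd hm (havoid1 c hng m)
      · rintro ⟨m, hm⟩; exact absurd hm (havoid2 c hng m)
  -- f is divergent
  have hfdiv : ¬ ∃ v, {i | f i = v}.Infinite := by
    rintro ⟨v, hv⟩
    apply hv
    apply Set.Finite.subset (Set.finite_Iio (dchain st1 r₀ (v + 2)).n)
    intro i hi
    simp only [Set.mem_Iio]
    by_contra hge
    have h1 : (dchain st1 r₀ (v + 2)).B ≤ f i := (hfmem (v + 2)).2 i (by omega)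
    have h2 : v + 1 ≤ (dchain st1 r₀ (v + 2)).B := (hst1 (v + 1) (dchain st1 r₀ (v + 1))).2.2.1
    have : f i = v := hi
    omega
  -- f' attains the value r₀.B infinitely often
  have hf'B : ∀ j, (dchain st2 r₀ j).B = r₀.B := by
    intro j
    induction j with
    | zero => rfl
    | succ j ih => rw [dchain, hB2 j (dchain st2 r₀ j), ih]
  have hf'in : ∃ v, {i | f' i = v}.Infinite := by
    refine ⟨r₀.B, Set.infinite_of_forall_exists_gt ?_⟩
    intro a
    obtain ⟨i, hi1, hi2, hi3⟩ := (hst2 (a + 1) (dchain st2 r₀ (a + 1))).2.2.2.1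
    refine ⟨i, ?_, ?_⟩
    · show f' i = r₀.B
      have hval : f' i = (st2 (a + 1) (dchain st2 r₀ (a + 1))).g i :=
        (hf'mem (a + 2)).1 i hi2
      rw [hval, hi3, hf'B]
    · have := dchain_n (st := st2) (r₀ := r₀) hn2 (a + 1)
      omega
  -- contradiction
  have h1 := (hL f).not.2
  have hevalf : ¬ BC.eval (fun c => ∃ m, f ∈ K c m) φ := by
    intro hev
    exact hfdiv ((hL f).2 hev)
  have hevalf' : BC.eval (fun c => ∃ m, f' ∈ K c m) φ := (hL f').1 hf'in
  exact hevalf ((BC.eval_congr hbits φ).2 hevalf')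

end CoreLemma

/-! #### The nondeterministic max-automaton for `L_sep` -/

def opsA : List (CounterOp Bool) := [.inc false]
def opsR : List (CounterOp Bool) := [.reset false]
def opsS : List (CounterOp Bool) :=
  [.output false, .inc true, .output true, .reset false]

lemma opsA_ne_opsS : opsA ≠ opsS := by simp [opsA, opsS]
lemma opsR_ne_opsS : opsR ≠ opsS := by simp [opsR, opsS]

/-- The nondeterministic max-automaton recognizing `L_sep`: counter `false`
counts the length of the current block of `a`'s; at each letter `b` the automaton
nondeterministically either just resets it, or also outputs it ("selects" the block)
and increments and outputs counter `true` (which counts selections).  Acceptance: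
the selected block lengths are bounded and infinitely many blocks are selected. -/
@[reducible] def NSep : NMaxAutomaton Bool where
  Q := Unit
  C := Bool
  init := ()
  δ := fun _ a => if a = true then {((), opsR), ((), opsS)} else {((), opsA)}
  acc := .an (.atom false) (.nt (.atom true))

lemma applyOps_opsA_fst (v : Bool → ℕ) :
    (applyOps opsA v).1 = Function.update v false (v false + 1) := by
  simp [opsA, applyOps, applyOp]

lemma applyOps_opsA_snd (v : Bool → ℕ) : (applyOps opsA v).2 = [] := by
  simp [opsA, applyOps, applyOp]

lemma applyOps_opsR_fst (v : Bool → ℕ) :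
    (applyOps opsR v).1 = Function.update v false 0 := by
  simp [opsR, applyOps, applyOp]

lemma applyOps_opsR_snd (v : Bool → ℕ) : (applyOps opsR v).2 = [] := by
  simp [opsR, applyOps, applyOp]

lemma applyOps_opsS_snd (v : Bool → ℕ) :
    (applyOps opsS v).2 = [(false, v false), (true, v true + 1)] := by
  simp [opsS, applyOps, applyOp, Function.update]

lemma applyOps_opsS_fst_false (v : Bool → ℕ) :
    (applyOps opsS v).1 false = 0 := by
  simp [opsS, applyOps, applyOp, Function.update]

lemma applyOps_opsS_fst_true (v : Bool → ℕ) :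
    (applyOps opsS v).1 true = v true + 1 := by
  simp [opsS, applyOps, applyOp, Function.update]

/-- Number of `a`'s since the last `b` (or since the start). -/
def cnt (w : ℕ → Bool) : ℕ → ℕ
  | 0 => 0
  | n + 1 => if w n = true then 0 else cnt w n + 1

open Classical in
/-- Number of positions `< n` satisfying `S`. -/
noncomputable def scount (S : ℕ → Prop) (n : ℕ) : ℕ :=
  ((Finset.range n).filter S).card

lemma scount_zero (S : ℕ → Prop) : scount S 0 = 0 := by
  simp [scount]

open Classical in
lemma scount_succ (S : ℕ → Prop) (n : ℕ) :
    scount S (n + 1) = if S n then scount S n + 1 else scount S n := by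
  classical
  simp only [scount, Finset.range_add_one, Finset.filter_insert,
    Finset.filter_congr_decidable]
  split_ifs with h
  · rw [Finset.card_insert_of_notMem (by simp)]
  · rfl

lemma scount_le (S : ℕ → Prop) (n : ℕ) : scount S n ≤ n := by
  classical
  calc scount S n ≤ (Finset.range n).card := by
        simp only [scount, Finset.filter_congr_decidable]
        exact Finset.card_filter_le _ _
    _ = n := Finset.card_range n

lemma le_scount_nth {S : ℕ → Prop} (hS : (setOf S).Infinite) (B : ℕ) :
    B ≤ scount S (Nat.nth S B) := by
  classical
  have hsub : (Finset.range B).image (Nat.nth S) ⊆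
      (Finset.range (Nat.nth S B)).filter S := by
    intro x hx
    simp only [Finset.mem_image, Finset.mem_range] at hx
    obtain ⟨j, hj, rfl⟩ := hx
    simp only [Finset.mem_filter, Finset.mem_range]
    exact ⟨Nat.nth_strictMono hS hj, Nat.nth_mem_of_infinite hS j⟩
  have hcard := Finset.card_le_card hsub
  rw [Finset.card_image_of_injective _ (Nat.nth_strictMono hS).injective,
    Finset.card_range] at hcard
  simp only [scount, Finset.filter_congr_decidable]
  exact le_trans hcard (le_of_eq rfl)

/-- Validity of a sequence of counter-operation lists for `NSep` on `w`. -/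
def ValidOps (w : ℕ → Bool) (ops : ℕ → List (CounterOp Bool)) : Prop :=
  ∀ n, (w n = true ∧ (ops n = opsR ∨ ops n = opsS)) ∨ (w n = false ∧ ops n = opsA)

lemma nvals_spec {w : ℕ → Bool} {ops : ℕ → List (CounterOp Bool)}
    (h : ValidOps w ops) :
    ∀ n, nvals ops n false = cnt w n ∧
      nvals ops n true = scount (fun i => ops i = opsS) n := by
  intro n
  induction n with
  | zero => exact ⟨rfl, (scount_zero _).symm⟩
  | succ n ih =>
    have hstep : nvals ops (n + 1) = (applyOps (ops n) (nvals ops n)).1 := rfl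
    rw [hstep]
    rcases h n with ⟨hw, hR | hS⟩ | ⟨hw, hA⟩
    · rw [hR]
      constructor
      · rw [applyOps_opsR_fst, Function.update_self]
        simp [cnt, hw]
      · rw [applyOps_opsR_fst, Function.update_of_ne (by simp)]
        rw [ih.2, scount_succ, if_neg (by rw [hR]; exact opsR_ne_opsS)]
    · rw [hS]
      constructor
      · rw [applyOps_opsS_fst_false]
        simp [cnt, hw]
      · rw [applyOps_opsS_fst_true, ih.2, scount_succ, if_pos hS]
    · rw [hA]
      constructor
      · rw [applyOps_opsA_fst, Function.update_self, ih.1]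
        simp [cnt, hw]
      · rw [applyOps_opsA_fst, Function.update_of_ne (by simp)]
        rw [ih.2, scount_succ, if_neg (by rw [hA]; exact opsA_ne_opsS)]

open Classical in
lemma nouts_spec {w : ℕ → Bool} {ops : ℕ → List (CounterOp Bool)}
    (h : ValidOps w ops) (n : ℕ) :
    nouts ops n = if ops n = opsS
      then [(false, cnt w n), (true, scount (fun i => ops i = opsS) n + 1)]
      else [] := by
  have hv := nvals_spec h n
  have hstep : nouts ops n = (applyOps (ops n) (nvals ops n)).2 := rfl
  rw [hstep]
  rcases h n with ⟨hw, hR | hS⟩ | ⟨hw, hA⟩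
  · rw [hR, applyOps_opsR_snd, if_neg opsR_ne_opsS]
  · rw [hS, applyOps_opsS_snd, if_pos rfl, hv.1, hv.2]
  · rw [hA, applyOps_opsA_snd, if_neg opsA_ne_opsS]

lemma cnt_claim1 {w : ℕ → Bool} {p : ℕ → ℕ}
    (hw : ∀ m, w m = true ↔ ∃ k, p k = m) (hp : StrictMono p) :
    ∀ i, i ≤ p 0 → cnt w i = i := by
  intro i
  induction i with
  | zero => intro _; rfl
  | succ i ih =>
    intro hi
    have hwi : ¬ w i = true := by
      rw [hw i]
      rintro ⟨k, hk⟩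
      have : p 0 ≤ p k := hp.monotone (Nat.zero_le k)
      omega
    show (if w i = true then 0 else cnt w i + 1) = i + 1
    rw [if_neg hwi, ih (by omega)]

lemma cnt_claim2 {w : ℕ → Bool} {p : ℕ → ℕ}
    (hw : ∀ m, w m = true ↔ ∃ k, p k = m) (hp : StrictMono p) (k : ℕ) :
    ∀ i, p k < i → i ≤ p (k + 1) → cnt w i = i - p k - 1 := by
  intro i
  induction i with
  | zero => omega
  | succ i ih =>
    intro h1 h2
    by_cases hik : i = p k
    · have hwi : w i = true := (hw i).2 ⟨k, hik.symm⟩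
      show (if w i = true then 0 else cnt w i + 1) = i + 1 - p k - 1
      rw [if_pos hwi]
      omega
    · have hque : p k < i := by omega
      have hwi : ¬ w i = true := by
        rw [hw i]
        rintro ⟨j, rfl⟩
        rcases le_or_gt j k with h | h
        · have := hp.monotone h; omega
        · have := hp.monotone (show k + 1 ≤ j by omega); omega
      show (if w i = true then 0 else cnt w i + 1) = i + 1 - p k - 1
      rw [if_neg hwi, ih hque (by omega)]
      omega

lemma cnt_bpos {w : ℕ → Bool} {ns : ℕ → ℕ}
    (hw : ∀ m, w m = true ↔ ∃ k, bpos ns k = m) :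
    ∀ k, cnt w (bpos ns k) = ns k := by
  intro k
  cases k with
  | zero =>
    rw [cnt_claim1 hw (bpos_strictMono ns) _ le_rfl, bpos_zero]
  | succ k =>
    rw [cnt_claim2 hw (bpos_strictMono ns) k _
      ((bpos_strictMono ns) (show k < k + 1 by omega)) le_rfl, bpos_succ]
    omega

lemma NSep_accepts_mem_Lsep {w : ℕ → Bool} (h : NSep.Accepts w) : w ∈ Lsep := by
  classical
  obtain ⟨q, ops, hq0, hmem, hacc⟩ := h
  have hvalid : ValidOps w ops := by
    intro n
    have hm := hmem n
    by_cases hw : w n = true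
    · left
      refine ⟨hw, ?_⟩
      simp only [NSep, hw, if_pos, Set.mem_insert_iff, Set.mem_singleton_iff,
        Prod.ext_iff] at hm
      rcases hm with ⟨_, h'⟩ | ⟨_, h'⟩
      · exact Or.inl h'
      · exact Or.inr h'
    · right
      have hw' : w n = false := by simp at hw; exact hw
      refine ⟨hw', ?_⟩
      simp only [NSep, hw'] at hm
      rw [if_neg (by simp : ¬ (false = true)), Set.mem_singleton_iff] at hm
      exact (Prod.ext_iff.1 hm).2
  have hacc' : (∃ B, ∀ n, ∀ p ∈ nouts ops n, p.1 = false → p.2 ≤ B) ∧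
      ¬ (∃ B, ∀ n, ∀ p ∈ nouts ops n, p.1 = true → p.2 ≤ B) := by
    simpa [NSep, BC.eval] using hacc
  obtain ⟨⟨Bd, hBd⟩, hUnb⟩ := hacc'
  set S : ℕ → Prop := fun n => ops n = opsS with hSdef
  have hSel_inf : (setOf S).Infinite := by
    by_contra hfin
    rw [Set.not_infinite] at hfin
    apply hUnb
    obtain ⟨N, hN⟩ := hfin.bddAbove
    refine ⟨N + 1, ?_⟩
    intro n p hp hpt
    rw [nouts_spec hvalid n] at hp
    by_cases hS : ops n = opsS
    · rw [if_pos hS] at hp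
      rcases List.mem_cons.1 hp with h' | h'
      · rw [h'] at hpt; simp at hpt
      · rw [List.mem_singleton] at h'
        rw [h']
        have hn : n ≤ N := hN hS
        have := scount_le (fun i => ops i = opsS) n
        simp only []
        omega
    · rw [if_neg hS] at hp
      simp at hp
  have hsub : setOf S ⊆ {m | w m = true} := by
    intro n hn
    rcases hvalid n with ⟨hw, _⟩ | ⟨_, hA⟩
    · exact hw
    · exact absurd (hA ▸ hn : opsA = opsS) opsA_ne_opsS
  have hT : {m | w m = true}.Infinite := hSel_inf.mono hsub
  set p : ℕ → ℕ := Nat.nth (fun m => w m = true) with hpdef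
  have hp : StrictMono p := Nat.nth_strictMono hT
  have hrange : ∀ m, w m = true ↔ ∃ k, p k = m := by
    intro m
    constructor
    · intro hm
      have : m ∈ Set.range p := by
        rw [hpdef, Nat.range_nth_of_infinite hT]; exact hm
      exact this
    · rintro ⟨k, rfl⟩
      exact Nat.nth_mem_of_infinite hT k
  set ns : ℕ → ℕ := fun k => match k with
    | 0 => p 0
    | k + 1 => p (k + 1) - p k - 1 with hnsdef
  have hbp : ∀ k, bpos ns k = p k := by
    intro k
    induction k with
    | zero => rw [bpos_zero]
    | succ k ih =>
      rw [bpos_succ, ih]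
      have := hp (show k < k + 1 by omega)
      show p k + (p (k + 1) - p k - 1) + 1 = p (k + 1)
      omega
  have hcnt : ∀ k, cnt w (p k) = ns k := by
    intro k
    cases k with
    | zero => exact cnt_claim1 hrange hp _ le_rfl
    | succ k => exact cnt_claim2 hrange hp k _ (hp (show k < k + 1 by omega)) le_rfl
  refine ⟨ns, ?_, ?_⟩
  · intro m
    rw [hrange m]
    exact exists_congr fun k => by rw [hbp k]
  · have hkey : ∀ n, S n → ∃ k, p k = n ∧ ns k ≤ Bd := by
      intro n hn
      obtain ⟨k, hk⟩ := (hrange n).1 (hsub hn)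
      refine ⟨k, hk, ?_⟩
      have hout : cnt w n ≤ Bd := by
        refine hBd n (false, cnt w n) ?_ rfl
        rw [nouts_spec hvalid n, if_pos hn]
        exact List.mem_cons_self
      rw [← hk, hcnt k] at hout
      exact hout
    by_contra hno
    push_neg at hno
    have hfin : {k | ns k ≤ Bd}.Finite := by
      have hsub2 : {k | ns k ≤ Bd} ⊆
          ⋃ v ∈ Finset.range (Bd + 1), {k | ns k = v} := by
        intro k hk
        have hk' : ns k ≤ Bd := hk
        simp only [Set.mem_iUnion, Set.mem_setOf_eq]
        exact ⟨ns k, by simp only [Finset.mem_range]; omega, rfl⟩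
      exact (Set.Finite.biUnion (Finset.range (Bd + 1)).finite_toSet
        (fun v _ => hno v)).subset hsub2
    have himg : setOf S ⊆ p '' {k | ns k ≤ Bd} := by
      intro n hn
      obtain ⟨k, hk1, hk2⟩ := hkey n hn
      exact ⟨k, hk2, hk1⟩
    exact hSel_inf ((hfin.image p).subset himg)

lemma mem_Lsep_NSep_accepts {w : ℕ → Bool} (h : w ∈ Lsep) : NSep.Accepts w := by
  classical
  obtain ⟨ns, hw, v, hv⟩ := h
  set SelB : ℕ → Prop := fun n => ∃ k, bpos ns k = n ∧ ns k = v with hSelBdef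
  set ops : ℕ → List (CounterOp Bool) := fun n =>
    if SelB n then opsS else if w n = true then opsR else opsA with hopsdef
  have hSelB_true : ∀ n, SelB n → w n = true := by
    rintro n ⟨k, hk, _⟩
    exact (hw n).2 ⟨k, hk⟩
  have hvalid : ValidOps w ops := by
    intro n
    by_cases hS : SelB n
    · exact Or.inl ⟨hSelB_true n hS, Or.inr (by simp [hopsdef, hS])⟩
    · by_cases hwn : w n = true
      · exact Or.inl ⟨hwn, Or.inl (by simp [hopsdef, hS, hwn])⟩
      · refine Or.inr ⟨by simpa using hwn, by simp [hopsdef, hS, hwn]⟩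
  have hSel_eq : ∀ n, (ops n = opsS) ↔ SelB n := by
    intro n
    by_cases hS : SelB n
    · simp [hopsdef, hS]
    · simp only [hopsdef, if_neg hS]
      constructor
      · intro h'
        by_cases hwn : w n = true
        · rw [if_pos hwn] at h'; exact absurd h' opsR_ne_opsS
        · rw [if_neg hwn] at h'; exact absurd h' opsA_ne_opsS
      · intro h'; exact absurd h' hS
  refine ⟨fun _ => (), ops, rfl, ?_, ?_⟩
  · intro n
    by_cases hS : SelB n
    · have hwn := hSelB_true n hS
      simp [NSep, hwn, hopsdef, hS]
    · by_cases hwn : w n = true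
      · simp [NSep, hwn, hopsdef, hS]
      · have hwn' : w n = false := by simpa using hwn
        simp [NSep, hwn', hopsdef, hS, hwn]
  · have hgoal : (∃ B, ∀ n, ∀ p ∈ nouts ops n, p.1 = false → p.2 ≤ B) ∧
        ¬ (∃ B, ∀ n, ∀ p ∈ nouts ops n, p.1 = true → p.2 ≤ B) → _ := fun h => h
    show BC.eval _ _
    have h1 : ∃ B, ∀ n, ∀ p ∈ nouts ops n, p.1 = false → p.2 ≤ B := by
      refine ⟨v, ?_⟩
      intro n p hp hpf
      rw [nouts_spec hvalid n] at hp
      by_cases hS : ops n = opsS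
      · rw [if_pos hS] at hp
        rcases List.mem_cons.1 hp with h' | h'
        · obtain ⟨k, hk, hkv⟩ := (hSel_eq n).1 hS
          rw [h']
          show cnt w n ≤ v
          rw [← hk, cnt_bpos hw k, hkv]
        · rw [List.mem_singleton] at h'
          rw [h'] at hpf
          simp at hpf
      · rw [if_neg hS] at hp
        simp at hp
    have h2 : ¬ (∃ B, ∀ n, ∀ p ∈ nouts ops n, p.1 = true → p.2 ≤ B) := by
      rintro ⟨B, hB⟩
      have hSelB_inf : (setOf SelB).Infinite := by
        have hEq : setOf SelB = bpos ns '' {k | ns k = v} := by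
          ext n
          constructor
          · rintro ⟨k, hk1, hk2⟩; exact ⟨k, hk2, hk1⟩
          · rintro ⟨k, hk2, hk1⟩; exact ⟨k, hk1, hk2⟩
        rw [hEq]
        exact hv.image ((bpos_strictMono ns).injective.injOn)
      have hS_inf : (setOf fun n => ops n = opsS).Infinite := by
        have hEq : (setOf fun n => ops n = opsS) = setOf SelB :=
          Set.ext fun n => hSel_eq n
        rw [hEq]
        exact hSelB_inf
      obtain ⟨n₀, hn₀, hcount⟩ :
          ∃ n₀, ops n₀ = opsS ∧ B ≤ scount (fun i => ops i = opsS) n₀ :=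
        ⟨Nat.nth (fun n => ops n = opsS) B, Nat.nth_mem_of_infinite hS_inf B,
          le_scount_nth hS_inf B⟩
      have hmemout : (true, scount (fun i => ops i = opsS) n₀ + 1) ∈ nouts ops n₀ := by
        rw [nouts_spec hvalid n₀, if_pos hn₀]
        simp
      have hle := hB n₀ _ hmemout rfl
      simp only [] at hle
      omega
    simpa [NSep, BC.eval] using And.intro h1 h2

/-- `NSep` recognizes exactly `L_sep`. -/
theorem NSep_lang : NSep.Lang = Lsep := by
  ext w
  exact ⟨fun h => NSep_accepts_mem_Lsep h, fun h => mem_Lsep_NSep_accepts h⟩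

/-- No deterministic max-automaton recognizes `L_sep`. -/
theorem det_impossible : ¬ ∃ A : MaxAutomaton Bool, A.Lang = Lsep := by
  rintro ⟨A, hA⟩
  classical
  set K : A.C → ℕ → Set (ℕ → ℕ) := fun c m =>
    {ns | ∀ n, ∀ p ∈ A.outsFrom A.init (wordOf ns) n, p.1 = c → p.2 ≤ m} with hKdef
  refine no_bc_sigma2 K ?_ A.acc ?_
  · intro c m ns hns
    simp only [hKdef, Set.mem_setOf_eq] at hns
    push_neg at hns
    obtain ⟨n, p, hp, hpc, hpm⟩ := hns
    refine ⟨n + 1, fun g hg hgK => ?_⟩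
    have houts : A.outsFrom A.init (wordOf g) n = A.outsFrom A.init (wordOf ns) n := by
      apply A.outsFrom_congr
      intro i hi
      exact wordOf_congr (fun j hj => hg j (by omega))
    simp only [hKdef, Set.mem_setOf_eq] at hgK
    exact absurd (hgK n p (houts ▸ hp) hpc) (by omega)
  · intro ns
    rw [← wordOf_mem_Lsep_iff, ← hA]
    show A.acc.eval (A.BoundedFrom A.init (wordOf ns)) ↔ _
    refine BC.eval_congr (fun c => ?_) A.acc
    show (∃ B, ∀ n, ∀ p ∈ A.outsFrom A.init (wordOf ns) n, p.1 = c → p.2 ≤ B) ↔ _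
    simp only [hKdef, Set.mem_setOf_eq]

end Aux

/-- The language `L_sep` is recognized by a nondeterministic
max-automaton but by no deterministic max-automaton; hence nondeterministic
max-automata are strictly more expressive than deterministic ones. -/
theorem nondeterministic_strictly_stronger :
    (∃ N : NMaxAutomaton Bool, N.Lang = Lsep) ∧
    ¬ ∃ A : MaxAutomaton Bool, A.Lang = Lsep := by
  exact ⟨⟨NSep, NSep_lang⟩, det_impossible⟩

end MaxReg
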